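/- For every integer l ≥ 0 and every t ∈ [0,1], Σ_{0 ≤ k < 2^l} | ∫₀^t ψ_{l,k}(x) dx | ≤ 2^{−l/2 − 1}, where ψ_{l,k} are the Haar wavelets. -/

import Mathlib

open MeasureTheory

/-- The Haar wavelet `ψ_{l,k}` on `[0,1]`: it equals `2^{l/2}` on
`(k·2^{−l}, (k+1/2)·2^{−l}]`, `−2^{l/2}` on `((k+1/2)·2^{−l}, (k+1)·2^{−l}]`,
and `0` elsewhere. -/
noncomputable def haar (l k : ℕ) (x : ℝ) : ℝ :=
  if (k : ℝ) / 2 ^ l < x ∧ x ≤ ((k : ℝ) + 1 / 2) / 2 ^ l then (2 : ℝ) ^ ((l : ℝ) / 2)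
  else if ((k : ℝ) + 1 / 2) / 2 ^ l < x ∧ x ≤ ((k : ℝ) + 1) / 2 ^ l then
    -((2 : ℝ) ^ ((l : ℝ) / 2))
  else 0

lemma haar_eq (l k : ℕ) : haar l k = fun x =>
    (Set.Ioc ((k:ℝ)/2^l) (((k:ℝ)+1/2)/2^l)).indicator (fun _ => (2:ℝ)^((l:ℝ)/2)) x
    + (Set.Ioc (((k:ℝ)+1/2)/2^l) (((k:ℝ)+1)/2^l)).indicator (fun _ => -(2:ℝ)^((l:ℝ)/2)) x := by
  funext x
  simp only [haar, Set.indicator_apply, Set.mem_Ioc]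
  split_ifs <;> simp_all <;> linarith

lemma indIoc_intInt (a b c t : ℝ) :
    IntervalIntegrable ((Set.Ioc a b).indicator fun _ => c) volume 0 t := by
  rw [intervalIntegrable_iff]
  exact (integrableOn_const measure_Ioc_lt_top.ne enorm_ne_top).indicator measurableSet_Ioc

lemma ind_integral (a b c t : ℝ) (ht : 0 ≤ t) (ha : 0 ≤ a) (hab : a ≤ b) :
    ∫ x in (0:ℝ)..t, (Set.Ioc a b).indicator (fun _ => c) x
      = c * (min t b - min t a) := by
  rw [intervalIntegral.integral_of_le ht, setIntegral_indicator measurableSet_Ioc,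
    Set.Ioc_inter_Ioc, setIntegral_const, Real.volume_real_Ioc,
    smul_eq_mul]
  rcases le_total t a with h | h
  · rw [min_eq_left (h.trans hab), min_eq_left h]
    simp [max_eq_right ha]; exact Or.inl h
  · rw [min_eq_right h, max_eq_right ha]
    rw [max_eq_left (by rcases le_total t b with h' | h' <;>
      simp [min_eq_left, min_eq_right, h'] <;> linarith)]
    ring

lemma haar_integral (l k : ℕ) (t : ℝ) (ht : 0 ≤ t) :
    ∫ x in (0:ℝ)..t, haar l k x
      = (2:ℝ)^((l:ℝ)/2) * (2 * min t (((k:ℝ)+1/2)/2^l)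
          - min t ((k:ℝ)/2^l) - min t (((k:ℝ)+1)/2^l)) := by
  have h1 : (0:ℝ) ≤ (k:ℝ)/2^l := by positivity
  have h2 : (0:ℝ) ≤ ((k:ℝ)+1/2)/2^l := by positivity
  have hab : (k:ℝ)/2^l ≤ ((k:ℝ)+1/2)/2^l := by gcongr <;> norm_num
  have hbc : ((k:ℝ)+1/2)/2^l ≤ ((k:ℝ)+1)/2^l := by gcongr <;> norm_num
  rw [haar_eq]
  rw [intervalIntegral.integral_add (indIoc_intInt _ _ _ _) (indIoc_intInt _ _ _ _),
    ind_integral _ _ _ _ ht h1 hab, ind_integral _ _ _ _ ht h2 hbc]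
  ring

lemma key_abs (a m b t : ℝ) (ham : a ≤ m) (hmb : m ≤ b) (heq : b - m = m - a) :
    |2 * min t m - min t a - min t b| ≤ m - a := by
  rcases le_total t a with h1 | h1
  · rw [min_eq_left h1, min_eq_left (h1.trans ham), min_eq_left (h1.trans (ham.trans hmb))]
    rw [abs_le]; constructor <;> linarith
  rcases le_total t m with h2 | h2
  · rw [min_eq_right h1, min_eq_left h2, min_eq_left (h2.trans hmb)]
    rw [abs_le]; constructor <;> linarith
  rcases le_total t b with h3 | h3
  · rw [min_eq_right h1, min_eq_right h2, min_eq_left h3]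
    rw [abs_le]; constructor <;> linarith
  · rw [min_eq_right h1, min_eq_right h2, min_eq_right h3]
    rw [abs_le]; constructor <;> linarith

lemma pow_bound (l : ℕ) : (2:ℝ)^((l:ℝ)/2) * ((1/2)/2^l) = (2:ℝ)^(-(l:ℝ)/2 - 1) := by
  have h2 : (0:ℝ) < 2 := two_pos
  rw [show ((2:ℝ)^l) = (2:ℝ)^((l:ℝ)) from (Real.rpow_natCast 2 l).symm]
  rw [show (1:ℝ)/2 = (2:ℝ)^(-1:ℝ) by rw [Real.rpow_neg_one]; norm_num]
  rw [← Real.rpow_sub h2, ← Real.rpow_add h2]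
  ring_nf

lemma haar_term_bound (l k : ℕ) (t : ℝ) (ht0 : 0 ≤ t) :
    |∫ x in (0:ℝ)..t, haar l k x| ≤ (2:ℝ)^(-(l:ℝ)/2 - 1) := by
  rw [haar_integral l k t ht0, abs_mul, abs_of_nonneg (by positivity)]
  have ham : (k:ℝ)/2^l ≤ ((k:ℝ)+1/2)/2^l := by gcongr <;> norm_num
  have hmb : ((k:ℝ)+1/2)/2^l ≤ ((k:ℝ)+1)/2^l := by gcongr <;> norm_num
  have heq : ((k:ℝ)+1)/2^l - ((k:ℝ)+1/2)/2^l = ((k:ℝ)+1/2)/2^l - (k:ℝ)/2^l := by ring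
  calc (2:ℝ)^((l:ℝ)/2) * |2 * min t (((k:ℝ)+1/2)/2^l)
          - min t ((k:ℝ)/2^l) - min t (((k:ℝ)+1)/2^l)|
      ≤ (2:ℝ)^((l:ℝ)/2) * (((k:ℝ)+1/2)/2^l - (k:ℝ)/2^l) :=
        mul_le_mul_of_nonneg_left (key_abs _ _ _ t ham hmb heq) (by positivity)
    _ = (2:ℝ)^((l:ℝ)/2) * ((1/2)/2^l) := by ring
    _ = (2:ℝ)^(-(l:ℝ)/2 - 1) := pow_bound l

/-- For every level `l ≥ 0` and every `t ∈ [0,1]`,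
`Σ_{0 ≤ k < 2^l} |∫₀^t ψ_{l,k}(x) dx| ≤ 2^{−l/2 − 1}`. -/
theorem haar_primitive_sum_bound (l : ℕ) (t : ℝ) (ht : t ∈ Set.Icc (0 : ℝ) 1) :
    ∑ k ∈ Finset.range (2 ^ l), |∫ x in (0 : ℝ)..t, haar l k x| ≤
      (2 : ℝ) ^ (-(l : ℝ) / 2 - 1) := by
  obtain ⟨ht0, ht1⟩ := ht
  have hp : (0:ℝ) < 2^l := by positivity
  set k₀ : ℕ := ⌊t * 2^l⌋₊ with hk₀
  have hfl : (k₀ : ℝ) ≤ t * 2^l := Nat.floor_le (by positivity)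
  have hfu : t * 2^l < (k₀ : ℝ) + 1 := Nat.lt_floor_add_one _
  have hzero : ∀ k : ℕ, ((k:ℝ)+1)/2^l ≤ t ∨ t ≤ (k:ℝ)/2^l →
      |∫ x in (0:ℝ)..t, haar l k x| = 0 := by
    intro k hk
    rw [haar_integral l k t ht0, abs_eq_zero]
    rcases hk with hk | hk
    · have hm : ((k:ℝ)+1/2)/2^l ≤ t := le_trans (by gcongr <;> norm_num) hk
      have ha : (k:ℝ)/2^l ≤ t := le_trans (by gcongr <;> norm_num) hk
      rw [min_eq_right hm, min_eq_right ha, min_eq_right hk]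
      ring
    · have hm : t ≤ ((k:ℝ)+1/2)/2^l := le_trans hk (by gcongr <;> norm_num)
      have hb : t ≤ ((k:ℝ)+1)/2^l := le_trans hk (by gcongr <;> norm_num)
      rw [min_eq_left hm, min_eq_left hk, min_eq_left hb]
      ring
  rw [Finset.sum_eq_single k₀]
  · exact haar_term_bound l k₀ t ht0
  · intro k _ hk
    apply hzero
    rcases lt_or_gt_of_ne hk with h | h
    · left
      have : (k:ℝ) + 1 ≤ (k₀:ℝ) := by exact_mod_cast h
      rw [div_le_iff₀ hp]
      linarith
    · right
      have : (k₀:ℝ) + 1 ≤ (k:ℝ) := by exact_mod_cast h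
      rw [le_div_iff₀ hp]
      linarith
  · intro hk
    apply hzero
    right
    have : (2:ℝ)^l ≤ (k₀:ℝ) := by
      have : (2^l : ℕ) ≤ k₀ := by simpa using hk
      exact_mod_cast (by exact_mod_cast this : ((2^l : ℕ) : ℝ) ≤ (k₀:ℝ))
    rw [le_div_iff₀ hp]
    nlinarith
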